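/- arXiv:2402.08607 — 2 statements merged into one kernel-verified Lean document; each statement's English description precedes it below -/
import Mathlib

section
/- (Local error bound for the midpoint BUG integrator.) Let L, B, M₂, M₃, h_max > 0 and integers m, n, r, r̂, q. There exists C > 0, depending only on L, B, M₂, M₃ and h_max, with the following property. Let F : ℝ × ℝ^{m×n} → ℝ^{m×n} be continuous with ‖F(t,Y) − F(t,Z)‖ ≤ L‖Y − Z‖ and ‖F(t,Y)‖ ≤ B for all t, Y, Z. Let 0 < h ≤ h_max, t₁ = t₀ + h, t_{1/2} = t₀ + h/2. Let A : [t₀,t₁] → ℝ^{m×n} be three times continuously differentiable with A'(t) = F(t,A(t)), ‖A''‖ ≤ M₂, ‖A'''‖ ≤ M₃, and A(t₀) = Y₀ = U₀ S₀ V₀ᵀ with orthonormal-column U₀ ∈ ℝ^{m×r}, V₀ ∈ ℝ^{n×r}. Assume the normal-component bounds: for all t ∈ [t₀,t₁], all orthonormal-column U ∈ ℝ^{m×r}, V ∈ ℝ^{n×r} and all S ∈ ℝ^{r×r}, ‖(I − UUᵀ) F(t, USVᵀ) (I − VVᵀ)‖ ≤ ε_r, and the same with r replaced by r̂ and bound ε_{r̂}.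 Perform the augmented BUG half-step: let K, Lm solve K'(t) = F(t, K(t) V₀ᵀ) V₀, K(t₀) = U₀S₀ and Lm'(t) = F(t, U₀ Lm(t)ᵀ)ᵀ U₀, Lm(t₀) = V₀S₀ᵀ on [t₀, t_{1/2}]; let Û ∈ ℝ^{m×r̂}, V̂ ∈ ℝ^{n×r̂} have orthonormal columns with Û Ûᵀ U₀ = U₀, Û Ûᵀ K(t_{1/2}) = K(t_{1/2}), V̂ V̂ᵀ V₀ = V₀, V̂ V̂ᵀ Lm(t_{1/2}) = Lm(t_{1/2}); let Ŝ solve Ŝ'(t) = Ûᵀ F(t, Û Ŝ(t) V̂ᵀ) V̂ on [t₀, t_{1/2}] with Ŝ(t₀) = Ûᵀ Y₀ V̂, and set Ŷ_{1/2} = Û Ŝ(t_{1/2}) V̂ᵀ. Perform the Galerkin step: let Ū ∈ ℝ^{m×q}, V̄ ∈ ℝ^{n×q} have orthonormal columns with Ū Ūᵀ Û = Û, Ū Ūᵀ (F(t_{1/2}, Ŷ_{1/2}) V̂) = F(t_{1/2}, Ŷ_{1/2}) V̂, V̄ V̄ᵀ V̂ = V̂, V̄ V̄ᵀ (F(t_{1/2},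 Ŷ_{1/2})ᵀ Û) = F(t_{1/2}, Ŷ_{1/2})ᵀ Û; let S̄ solve S̄'(t) = Ūᵀ F(t, Ū S̄(t) V̄ᵀ) V̄ on [t₀,t₁] with S̄(t₀) = Ūᵀ Y₀ V̄, and set Ȳ₁ = Ū S̄(t₁) V̄ᵀ. Then ‖Ȳ₁ − A(t₁)‖ ≤ C h (h² + h ε_r + ε_{r̂}). -/
set_option linter.unusedSectionVars false
set_option maxHeartbeats 1600000000
open Matrix Set
attribute [local instance] Matrix.frobeniusNormedAddCommGroup Matrix.frobeniusNormedSpace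

section helper
variable {α β γ δ : Type*} [Fintype α] [Fintype β] [Fintype γ] [Fintype δ]
  [DecidableEq α] [DecidableEq β] [DecidableEq γ] [DecidableEq δ]

lemma frob_sq (A : Matrix α β ℝ) : ‖A‖ ^ 2 = Matrix.trace (Aᵀ * A) := by
  have h2 : ∀ x : ℝ, x ^ (2:ℝ) = x ^ 2 := fun x => by
    rw [show (2:ℝ) = ((2:ℕ):ℝ) by norm_num, Real.rpow_natCast]
  have hS : (0:ℝ) ≤ ∑ i, ∑ j, ‖A i j‖ ^ (2:ℝ) :=
    Finset.sum_nonneg fun i _ => Finset.sum_nonneg fun j _ => by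
      rw [h2]; positivity
  rw [Matrix.frobenius_norm_def, ← Real.rpow_natCast _ 2, ← Real.rpow_mul hS]
  norm_num
  rw [Matrix.trace]
  simp only [Matrix.diag, Matrix.mul_apply, Matrix.transpose_apply]
  rw [Finset.sum_comm]
  congr 1; ext i; congr 1; ext j
  ring

/-- multiplication on the left by a matrix with orthonormal columns preserves the norm -/
lemma norm_orth_mul {Q : Matrix α β ℝ} (h : Qᵀ * Q = 1) (X : Matrix β γ ℝ) :
    ‖Q * X‖ = ‖X‖ := by
  have e : (Q * X)ᵀ * (Q * X) = Xᵀ * X := by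
    rw [Matrix.transpose_mul, Matrix.mul_assoc, ← Matrix.mul_assoc Qᵀ Q X, h, Matrix.one_mul]
  have := frob_sq (Q * X)
  rw [e, ← frob_sq X] at this
  calc ‖Q * X‖ = √(‖Q * X‖ ^ 2) := (Real.sqrt_sq (norm_nonneg _)).symm
  _ = √(‖X‖ ^ 2) := by rw [this]
  _ = ‖X‖ := Real.sqrt_sq (norm_nonneg _)

/-- multiplication on the left by a symmetric idempotent does not increase the norm -/
lemma norm_proj_mul_le {P : Matrix α α ℝ} (h1 : Pᵀ = P) (h2 : P * P = P)
    (X : Matrix α β ℝ) : ‖P * X‖ ≤ ‖X‖ := by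
  have e1 : (P * X)ᵀ * (P * X) = Xᵀ * (P * X) := by
    rw [Matrix.transpose_mul, h1, Matrix.mul_assoc, ← Matrix.mul_assoc P P X, h2]
  have h3 : (P * X)ᵀ * X = Xᵀ * (P * X) := by
    rw [Matrix.transpose_mul, h1, Matrix.mul_assoc]
  have e2 : (X - P * X)ᵀ * (X - P * X) = Xᵀ * X - Xᵀ * (P * X) := by
    rw [Matrix.transpose_sub, Matrix.sub_mul, Matrix.mul_sub, Matrix.mul_sub, e1, h3]
    abel
  have key : ‖P * X‖ ^ 2 + ‖X - P * X‖ ^ 2 = ‖X‖ ^ 2 := by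
    rw [frob_sq, frob_sq, frob_sq, e1, e2, Matrix.trace_sub]
    abel
  nlinarith [norm_nonneg (P * X), norm_nonneg X, sq_nonneg ‖X - P * X‖,
    norm_nonneg (X - P * X)]

lemma norm_mul_proj_le {P : Matrix β β ℝ} (h1 : Pᵀ = P) (h2 : P * P = P)
    (X : Matrix α β ℝ) : ‖X * P‖ ≤ ‖X‖ := by
  rw [← Matrix.frobenius_norm_transpose (X * P), Matrix.transpose_mul, h1,
    ← Matrix.frobenius_norm_transpose X]
  exact norm_proj_mul_le h1 h2 Xᵀ


lemma proj_symm {Q : Matrix α β ℝ} : (Q * Qᵀ)ᵀ = Q * Qᵀ := by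
  rw [Matrix.transpose_mul, Matrix.transpose_transpose]

lemma proj_idem {Q : Matrix α β ℝ} (h : Qᵀ * Q = 1) : (Q * Qᵀ) * (Q * Qᵀ) = Q * Qᵀ := by
  rw [Matrix.mul_assoc, ← Matrix.mul_assoc Qᵀ Q Qᵀ, h, Matrix.one_mul]

lemma oproj_symm {Q : Matrix α β ℝ} : (1 - Q * Qᵀ)ᵀ = 1 - Q * Qᵀ := by
  rw [Matrix.transpose_sub, Matrix.transpose_one, proj_symm]

lemma oproj_idem {Q : Matrix α β ℝ} (h : Qᵀ * Q = 1) :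
    (1 - Q * Qᵀ) * (1 - Q * Qᵀ) = 1 - Q * Qᵀ := by
  simp only [Matrix.sub_mul, Matrix.mul_sub, Matrix.one_mul, Matrix.mul_one, proj_idem h]
  abel

/-- `‖Q Qᵀ X‖ ≤ ‖X‖` for orthonormal columns `Q` -/
lemma norm_P_mul_le {Q : Matrix α β ℝ} (h : Qᵀ * Q = 1) (X : Matrix α γ ℝ) :
    ‖Q * Qᵀ * X‖ ≤ ‖X‖ := norm_proj_mul_le proj_symm (proj_idem h) X

lemma norm_oP_mul_le {Q : Matrix α β ℝ} (h : Qᵀ * Q = 1) (X : Matrix α γ ℝ) :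
    ‖(1 - Q * Qᵀ) * X‖ ≤ ‖X‖ := norm_proj_mul_le oproj_symm (oproj_idem h) X

lemma norm_mul_P_le {Q : Matrix β γ ℝ} (h : Qᵀ * Q = 1) (X : Matrix α β ℝ) :
    ‖X * (Q * Qᵀ)‖ ≤ ‖X‖ := norm_mul_proj_le proj_symm (proj_idem h) X

lemma norm_mul_oP_le {Q : Matrix β γ ℝ} (h : Qᵀ * Q = 1) (X : Matrix α β ℝ) :
    ‖X * (1 - Q * Qᵀ)‖ ≤ ‖X‖ := norm_mul_proj_le oproj_symm (oproj_idem h) X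

/-- `‖X Qᵀ‖ = ‖X‖` for orthonormal columns `Q` -/
lemma norm_mul_orthT {Q : Matrix α β ℝ} (h : Qᵀ * Q = 1) (X : Matrix γ β ℝ) :
    ‖X * Qᵀ‖ = ‖X‖ := by
  rw [← Matrix.frobenius_norm_transpose (X * Qᵀ), Matrix.transpose_mul,
    Matrix.transpose_transpose, norm_orth_mul h, Matrix.frobenius_norm_transpose]

/-- `‖Qᵀ X‖ ≤ ‖X‖` for orthonormal columns `Q` -/
lemma norm_orthT_mul_le {Q : Matrix α β ℝ} (h : Qᵀ * Q = 1) (X : Matrix α γ ℝ) :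
    ‖Qᵀ * X‖ ≤ ‖X‖ := by
  have : ‖Q * (Qᵀ * X)‖ = ‖Qᵀ * X‖ := norm_orth_mul h _
  rw [← this, ← Matrix.mul_assoc]
  exact norm_P_mul_le h X

lemma norm_mul_orth_le {Q : Matrix β γ ℝ} (h : Qᵀ * Q = 1) (X : Matrix α β ℝ) :
    ‖X * Q‖ ≤ ‖X‖ := by
  rw [← Matrix.frobenius_norm_transpose (X * Q), Matrix.transpose_mul,
    ← Matrix.frobenius_norm_transpose X]
  exact norm_orthT_mul_le h Xᵀ

end helper

section deriv
variable {a b c d : ℕ} {s : Set ℝ} {t : ℝ}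

lemma hasDerivWithinAt_mulLR (U : Matrix (Fin a) (Fin b) ℝ) (V : Matrix (Fin c) (Fin d) ℝ)
    {S : ℝ → Matrix (Fin b) (Fin c) ℝ} {S' : Matrix (Fin b) (Fin c) ℝ}
    (hS : HasDerivWithinAt S S' s t) :
    HasDerivWithinAt (fun τ => U * S τ * V) (U * S' * V) s t := by
  have hlin : IsBoundedLinearMap ℝ (fun X : Matrix (Fin b) (Fin c) ℝ => U * X * V) := by
    refine ⟨⟨fun X Y => ?_, fun cc X => ?_⟩, ‖U‖ * ‖V‖ + 1, by positivity, ?_⟩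
    · rw [Matrix.mul_add, Matrix.add_mul]
    · rw [Matrix.mul_smul, Matrix.smul_mul]
    · intro X
      calc ‖U * X * V‖ ≤ ‖U * X‖ * ‖V‖ := Matrix.frobenius_norm_mul _ _
      _ ≤ ‖U‖ * ‖X‖ * ‖V‖ :=
          mul_le_mul_of_nonneg_right (Matrix.frobenius_norm_mul _ _) (norm_nonneg _)
      _ = ‖U‖ * ‖V‖ * ‖X‖ := by ring
      _ ≤ (‖U‖ * ‖V‖ + 1) * ‖X‖ := by
          have := norm_nonneg X; nlinarith
  exact (hlin.hasFDerivAt (x := S t)).comp_hasDerivWithinAt t hS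

lemma hasDerivWithinAt_mulT (U : Matrix (Fin a) (Fin b) ℝ)
    {S : ℝ → Matrix (Fin c) (Fin b) ℝ} {S' : Matrix (Fin c) (Fin b) ℝ}
    (hS : HasDerivWithinAt S S' s t) :
    HasDerivWithinAt (fun τ => U * (S τ)ᵀ) (U * S'ᵀ) s t := by
  have hlin : IsBoundedLinearMap ℝ (fun X : Matrix (Fin c) (Fin b) ℝ => U * Xᵀ) := by
    refine ⟨⟨fun X Y => ?_, fun cc X => ?_⟩, ‖U‖ + 1, by positivity, ?_⟩
    · rw [Matrix.transpose_add, Matrix.mul_add]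
    · rw [Matrix.transpose_smul, Matrix.mul_smul]
    · intro X
      calc ‖U * Xᵀ‖ ≤ ‖U‖ * ‖Xᵀ‖ := Matrix.frobenius_norm_mul _ _
      _ = ‖U‖ * ‖X‖ := by rw [Matrix.frobenius_norm_transpose]
      _ ≤ (‖U‖ + 1) * ‖X‖ := by have := norm_nonneg X; nlinarith
  exact (hlin.hasFDerivAt (x := S t)).comp_hasDerivWithinAt t hS

end deriv

section gronwall

/-- Grönwall estimate with zero initial value, on `[a, b]`. -/
lemma gronwall_zero {E : Type*} [NormedAddCommGroup E] [NormedSpace ℝ E]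
    {f f' : ℝ → E} {a b Kc ε : ℝ} (hK : 0 < Kc) (hε : 0 ≤ ε)
    (hd : ∀ t ∈ Icc a b, HasDerivWithinAt f (f' t) (Icc a b) t)
    (hbd : ∀ t ∈ Icc a b, ‖f' t‖ ≤ Kc * ‖f t‖ + ε) (h0 : f a = 0) :
    ∀ t ∈ Icc a b, ‖f t‖ ≤ ε * (b - a) * Real.exp (Kc * (b - a)) := by
  intro t ht
  have hab : a ≤ b := le_trans ht.1 ht.2
  have hcont : ContinuousOn f (Icc a b) := fun x hx => (hd x hx).continuousWithinAt
  have key := norm_le_gronwallBound_of_norm_deriv_right_le hcont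
    (fun x hx => (hd x (Ico_subset_Icc_self hx)).mono_of_mem_nhdsWithin
      (Icc_mem_nhdsGE_of_mem hx))
    (by rw [h0, norm_zero]) (fun x hx => hbd x (Ico_subset_Icc_self hx)) t ht
  have hgb : gronwallBound 0 Kc ε (t - a) = ε / Kc * (Real.exp (Kc * (t - a)) - 1) := by
    rw [gronwallBound_of_K_ne_0 hK.ne']; simp
  rw [hgb] at key
  refine key.trans ?_
  set s := t - a with hs
  have hs0 : 0 ≤ s := by simp [hs]; linarith [ht.1]
  have hsb : s ≤ b - a := by simp [hs]; linarith [ht.2]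
  have hKne : Kc ≠ 0 := hK.ne'
  have h1 : Real.exp (Kc * s) - 1 ≤ Kc * s * Real.exp (Kc * s) := by
    have h2 : 1 - Kc * s ≤ Real.exp (-(Kc * s)) := by
      have := Real.add_one_le_exp (-(Kc * s)); linarith
    have h5 := Real.exp_pos (Kc * s)
    have h6 : (1 - Kc * s) * Real.exp (Kc * s) ≤ Real.exp (-(Kc * s)) * Real.exp (Kc * s) :=
      mul_le_mul_of_nonneg_right h2 h5.le
    rw [← Real.exp_add, neg_add_cancel, Real.exp_zero] at h6
    nlinarith
  have he : Real.exp (Kc * s) ≤ Real.exp (Kc * (b - a)) :=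
    Real.exp_le_exp.mpr (by nlinarith)
  have h4 : ε * s ≤ ε * (b - a) := by nlinarith
  calc ε / Kc * (Real.exp (Kc * s) - 1) ≤ ε / Kc * (Kc * s * Real.exp (Kc * s)) :=
        mul_le_mul_of_nonneg_left h1 (by positivity)
  _ = ε * s * Real.exp (Kc * s) := by field_simp
  _ ≤ ε * (b - a) * Real.exp (Kc * s) :=
        mul_le_mul_of_nonneg_right h4 (Real.exp_pos _).le
  _ ≤ ε * (b - a) * Real.exp (Kc * (b - a)) := by
        apply mul_le_mul_of_nonneg_left he
        have := mul_nonneg hε hs0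
        nlinarith

end gronwall

section deriv2
variable {a b c : ℕ} {s : Set ℝ} {t : ℝ}

lemma hasDerivWithinAt_mulL (U : Matrix (Fin a) (Fin b) ℝ)
    {S : ℝ → Matrix (Fin b) (Fin c) ℝ} {S' : Matrix (Fin b) (Fin c) ℝ}
    (hS : HasDerivWithinAt S S' s t) :
    HasDerivWithinAt (fun τ => U * S τ) (U * S') s t := by
  have hlin : IsBoundedLinearMap ℝ (fun X : Matrix (Fin b) (Fin c) ℝ => U * X) := by
    refine ⟨⟨fun X Y => ?_, fun cc X => ?_⟩, ‖U‖ + 1, by positivity, ?_⟩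
    · rw [Matrix.mul_add]
    · rw [Matrix.mul_smul]
    · intro X
      calc ‖U * X‖ ≤ ‖U‖ * ‖X‖ := Matrix.frobenius_norm_mul _ _
      _ ≤ (‖U‖ + 1) * ‖X‖ := by have := norm_nonneg X; nlinarith
  exact (hlin.hasFDerivAt (x := S t)).comp_hasDerivWithinAt t hS

lemma hasDerivWithinAt_mulR (V : Matrix (Fin b) (Fin c) ℝ)
    {S : ℝ → Matrix (Fin a) (Fin b) ℝ} {S' : Matrix (Fin a) (Fin b) ℝ}
    (hS : HasDerivWithinAt S S' s t) :
    HasDerivWithinAt (fun τ => S τ * V) (S' * V) s t := by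
  have hlin : IsBoundedLinearMap ℝ (fun X : Matrix (Fin a) (Fin b) ℝ => X * V) := by
    refine ⟨⟨fun X Y => ?_, fun cc X => ?_⟩, ‖V‖ + 1, by positivity, ?_⟩
    · rw [Matrix.add_mul]
    · rw [Matrix.smul_mul]
    · intro X
      calc ‖X * V‖ ≤ ‖X‖ * ‖V‖ := Matrix.frobenius_norm_mul _ _
      _ ≤ (‖V‖ + 1) * ‖X‖ := by have := norm_nonneg X; nlinarith
  exact (hlin.hasFDerivAt (x := S t)).comp_hasDerivWithinAt t hS

end deriv2

section absorb
variable {α β γ : Type*} [Fintype α] [Fintype β] [Fintype γ] [DecidableEq α] [DecidableEq β] [DecidableEq γ]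

lemma norm_sub_le₃ {E : Type*} [SeminormedAddCommGroup E] (a b c : E) :
    ‖a - c‖ ≤ ‖a - b‖ + ‖b - c‖ := by
  have := norm_add_le (a - b) (b - c); rwa [sub_add_sub_cancel] at this

lemma oproj_absorb {Q1 : Matrix α β ℝ} {Q2 : Matrix α γ ℝ} (h : Q1 * Q1ᵀ * Q2 = Q2) :
    (1 - Q1 * Q1ᵀ) * (1 - Q2 * Q2ᵀ) = 1 - Q1 * Q1ᵀ := by
  have h2 : Q1 * Q1ᵀ * (Q2 * Q2ᵀ) = Q2 * Q2ᵀ := by rw [← Matrix.mul_assoc, h]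
  simp only [Matrix.mul_sub, Matrix.sub_mul, Matrix.mul_one, Matrix.one_mul, h2]
  abel

lemma oproj_absorb' {Q1 : Matrix α β ℝ} {Q2 : Matrix α γ ℝ} (h : Q1 * Q1ᵀ * Q2 = Q2) :
    (1 - Q2 * Q2ᵀ) * (1 - Q1 * Q1ᵀ) = 1 - Q1 * Q1ᵀ := by
  have h1 := congrArg Matrix.transpose (oproj_absorb h)
  rwa [Matrix.transpose_mul, oproj_symm, oproj_symm] at h1

end absorb

/-- Local error bound for the midpoint BUG integrator. -/
theorem midpoint_bug_local_error (m n r rh q : ℕ) (L B M₂ M₃ hmax : ℝ)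
    (hL : 0 < L) (hB : 0 < B) (hM₂ : 0 < M₂) (hM₃ : 0 < M₃) (hhmax : 0 < hmax) :
    ∃ C > 0,
      ∀ (F : ℝ → Matrix (Fin m) (Fin n) ℝ → Matrix (Fin m) (Fin n) ℝ)
        (t₀ h εr εrh : ℝ)
        (A A₂ A₃ : ℝ → Matrix (Fin m) (Fin n) ℝ)
        (U₀ : Matrix (Fin m) (Fin r) ℝ) (V₀ : Matrix (Fin n) (Fin r) ℝ)
        (S₀ : Matrix (Fin r) (Fin r) ℝ) (Y₀ : Matrix (Fin m) (Fin n) ℝ)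
        (K : ℝ → Matrix (Fin m) (Fin r) ℝ) (Lm : ℝ → Matrix (Fin n) (Fin r) ℝ)
        (Uhat : Matrix (Fin m) (Fin rh) ℝ) (Vhat : Matrix (Fin n) (Fin rh) ℝ)
        (Shat : ℝ → Matrix (Fin rh) (Fin rh) ℝ) (Yhalf : Matrix (Fin m) (Fin n) ℝ)
        (Ubar : Matrix (Fin m) (Fin q) ℝ) (Vbar : Matrix (Fin n) (Fin q) ℝ)
        (Sbar : ℝ → Matrix (Fin q) (Fin q) ℝ) (Ybar₁ : Matrix (Fin m) (Fin n) ℝ),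
        -- F continuous, Lipschitz and bounded
        (Continuous fun z : ℝ × Matrix (Fin m) (Fin n) ℝ => F z.1 z.2) →
        (∀ (t : ℝ) (Y Z : Matrix (Fin m) (Fin n) ℝ), ‖F t Y - F t Z‖ ≤ L * ‖Y - Z‖) →
        (∀ (t : ℝ) (Y : Matrix (Fin m) (Fin n) ℝ), ‖F t Y‖ ≤ B) →
        -- stepsize
        0 < h → h ≤ hmax →
        -- exact solution, three times continuously differentiable
        (∀ t ∈ Icc t₀ (t₀ + h), HasDerivWithinAt A (F t (A t)) (Icc t₀ (t₀ + h)) t) →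
        (∀ t ∈ Icc t₀ (t₀ + h),
          HasDerivWithinAt (fun s => F s (A s)) (A₂ t) (Icc t₀ (t₀ + h)) t) →
        (∀ t ∈ Icc t₀ (t₀ + h), HasDerivWithinAt A₂ (A₃ t) (Icc t₀ (t₀ + h)) t) →
        ContinuousOn A₃ (Icc t₀ (t₀ + h)) →
        (∀ t ∈ Icc t₀ (t₀ + h), ‖A₂ t‖ ≤ M₂) →
        (∀ t ∈ Icc t₀ (t₀ + h), ‖A₃ t‖ ≤ M₃) →
        -- initial value of rank r
        U₀ᵀ * U₀ = 1 → V₀ᵀ * V₀ = 1 → Y₀ = U₀ * S₀ * V₀ᵀ → A t₀ = Y₀ →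
        -- normal-component bounds for rank r and rank r̂
        (∀ t ∈ Icc t₀ (t₀ + h), ∀ (U : Matrix (Fin m) (Fin r) ℝ)
          (V : Matrix (Fin n) (Fin r) ℝ) (S : Matrix (Fin r) (Fin r) ℝ),
          Uᵀ * U = 1 → Vᵀ * V = 1 →
          ‖(1 - U * Uᵀ) * F t (U * S * Vᵀ) * (1 - V * Vᵀ)‖ ≤ εr) →
        (∀ t ∈ Icc t₀ (t₀ + h), ∀ (U : Matrix (Fin m) (Fin rh) ℝ)
          (V : Matrix (Fin n) (Fin rh) ℝ) (S : Matrix (Fin rh) (Fin rh) ℝ),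
          Uᵀ * U = 1 → Vᵀ * V = 1 →
          ‖(1 - U * Uᵀ) * F t (U * S * Vᵀ) * (1 - V * Vᵀ)‖ ≤ εrh) →
        -- K-step and L-step of the augmented BUG half-step
        (∀ t ∈ Icc t₀ (t₀ + h / 2),
          HasDerivWithinAt K (F t (K t * V₀ᵀ) * V₀) (Icc t₀ (t₀ + h / 2)) t) →
        K t₀ = U₀ * S₀ →
        (∀ t ∈ Icc t₀ (t₀ + h / 2),
          HasDerivWithinAt Lm ((F t (U₀ * (Lm t)ᵀ))ᵀ * U₀) (Icc t₀ (t₀ + h / 2)) t) →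
        Lm t₀ = V₀ * S₀ᵀ →
        -- augmented orthonormal bases of the half-step
        Uhatᵀ * Uhat = 1 → Vhatᵀ * Vhat = 1 →
        Uhat * Uhatᵀ * U₀ = U₀ → Uhat * Uhatᵀ * K (t₀ + h / 2) = K (t₀ + h / 2) →
        Vhat * Vhatᵀ * V₀ = V₀ → Vhat * Vhatᵀ * Lm (t₀ + h / 2) = Lm (t₀ + h / 2) →
        -- Galerkin S-step of the half-step
        (∀ t ∈ Icc t₀ (t₀ + h / 2),
          HasDerivWithinAt Shat (Uhatᵀ * F t (Uhat * Shat t * Vhatᵀ) * Vhat)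
            (Icc t₀ (t₀ + h / 2)) t) →
        Shat t₀ = Uhatᵀ * Y₀ * Vhat →
        Yhalf = Uhat * Shat (t₀ + h / 2) * Vhatᵀ →
        -- augmented orthonormal bases of the Galerkin step
        Ubarᵀ * Ubar = 1 → Vbarᵀ * Vbar = 1 →
        Ubar * Ubarᵀ * Uhat = Uhat →
        Ubar * Ubarᵀ * (F (t₀ + h / 2) Yhalf * Vhat) = F (t₀ + h / 2) Yhalf * Vhat →
        Vbar * Vbarᵀ * Vhat = Vhat →
        Vbar * Vbarᵀ * ((F (t₀ + h / 2) Yhalf)ᵀ * Uhat) = (F (t₀ + h / 2) Yhalf)ᵀ * Uhat →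
        -- Galerkin step over the full step
        (∀ t ∈ Icc t₀ (t₀ + h),
          HasDerivWithinAt Sbar (Ubarᵀ * F t (Ubar * Sbar t * Vbarᵀ) * Vbar)
            (Icc t₀ (t₀ + h)) t) →
        Sbar t₀ = Ubarᵀ * Y₀ * Vbar →
        Ybar₁ = Ubar * Sbar (t₀ + h) * Vbarᵀ →
        ‖Ybar₁ - A (t₀ + h)‖ ≤ C * h * (h ^ 2 + h * εr + εrh) := by
  have e1 : (0:ℝ) < Real.exp (L * hmax) := Real.exp_pos _
  have p1 : (0:ℝ) < L * (B * Real.exp (L * hmax)) + 2 * M₂ := by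
    nlinarith [mul_pos hL (mul_pos hB e1)]
  refine ⟨Real.exp (L * hmax) *
      (L * M₂ + 2 * L * Real.exp (L * hmax) * (L * (B * Real.exp (L * hmax)) + 2 * M₂) +
        2 * M₃ + 2 * L * Real.exp (L * hmax) + 2), ?_, ?_⟩
  · have p2 : (0:ℝ) < 2 * L * Real.exp (L * hmax) *
        (L * (B * Real.exp (L * hmax)) + 2 * M₂) := by
      apply mul_pos _ p1; nlinarith [mul_pos hL e1]
    have p3 : (0:ℝ) < L * M₂ := mul_pos hL hM₂
    have p4 : (0:ℝ) < 2 * L * Real.exp (L * hmax) := by nlinarith [mul_pos hL e1]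
    exact mul_pos e1 (by linarith)
  intro F t₀ h εr εrh A A₂ A₃ U₀ V₀ S₀ Y₀ K Lm Uhat Vhat Shat Yhalf Ubar Vbar Sbar Ybar₁
  intro hFc hFlip hFb hh hhm hA' hA2' hA3' hA3c hA2b hA3b hU₀ hV₀ hY₀ hAt₀ hNr hNrh
    hK' hK0 hLm' hLm0 hUh hVh hUhU₀ hUhK hVhV₀ hVhL hSh' hSh0 hYh hUb hVb hUbUh hUbF
    hVbVh hVbF hSb' hSb0 hYb
  clear hFc hA3c
  obtain ⟨c3, hc3⟩ : ∃ x : ℝ, x = Real.exp (L * hmax) := ⟨_, rfl⟩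
  rw [← hc3]
  obtain ⟨c1, hc1⟩ : ∃ x : ℝ, x = B * c3 := ⟨_, rfl⟩
  rw [← hc1]
  obtain ⟨c2, hc2⟩ : ∃ x : ℝ, x = L * c1 + 2 * M₂ := ⟨_, rfl⟩
  rw [← hc2]
  obtain ⟨t1, ht1⟩ : ∃ x : ℝ, x = t₀ + h := ⟨_, rfl⟩
  rw [← ht1] at hA' hA2' hA3' hA2b hA3b hNr hNrh hSb' hYb ⊢
  obtain ⟨th, hth⟩ : ∃ x : ℝ, x = t₀ + h / 2 := ⟨_, rfl⟩
  rw [← hth] at hK' hLm' hUhK hVhL hSh' hYh hUbF hVbF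
  have hthle : th ≤ t1 := by rw [hth, ht1]; linarith
  have h0th : t₀ ≤ th := by rw [hth]; linarith
  have h0t1 : t₀ ≤ t1 := by rw [ht1]; linarith
  have hsub : Icc t₀ th ⊆ Icc t₀ t1 := Icc_subset_Icc le_rfl hthle
  have ht₀m : t₀ ∈ Icc t₀ t1 := ⟨le_rfl, h0t1⟩
  have hthm : th ∈ Icc t₀ t1 := ⟨h0th, hthle⟩
  have ht₀mh : t₀ ∈ Icc t₀ th := ⟨le_rfl, h0th⟩
  have hthmh : th ∈ Icc t₀ th := ⟨h0th, le_rfl⟩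
  have hεr : 0 ≤ εr := le_trans (norm_nonneg _) (hNr t₀ ht₀m U₀ V₀ S₀ hU₀ hV₀)
  have hεrh : 0 ≤ εrh := le_trans (norm_nonneg _) (hNrh t₀ ht₀m Uhat Vhat (Shat t₀) hUh hVh)
  have hc3p : 0 < c3 := by rw [hc3]; positivity
  have hc1p : 0 < c1 := by rw [hc1]; exact mul_pos hB hc3p
  have hc2p : 0 < c2 := by rw [hc2]; have := mul_pos hL hc1p; linarith
  have hexp2 : Real.exp (L * (h / 2)) ≤ c3 := by
    rw [hc3]; apply Real.exp_le_exp.mpr; nlinarith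
  have hexp1 : Real.exp (L * h) ≤ c3 := by
    rw [hc3]; apply Real.exp_le_exp.mpr; nlinarith
  have hc2h : (0:ℝ) ≤ c2 * h := (mul_pos hc2p hh).le
  have hcε : (0:ℝ) ≤ c2 * h + εr := add_nonneg hc2h hεr
  have hq2 : (0:ℝ) ≤ c3 * (c2 * h + εr) * h :=
    mul_nonneg (mul_nonneg hc3p.le hcε) hh.le
  obtain ⟨gg, hgg⟩ : ∃ x : ℝ, x = L * (M₂ * h ^ 2 / 4)
      + (2 * L * (c3 * (c2 * h + εr) * h) + 2 * εrh) + 2 * (M₃ * h ^ 2) := ⟨_, rfl⟩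
  have hggpos : (0:ℝ) ≤ gg := by
    rw [hgg]
    have q1 : (0:ℝ) ≤ M₂ * h ^ 2 / 4 :=
      div_nonneg (mul_nonneg hM₂.le (sq_nonneg h)) (by norm_num)
    have q3 : (0:ℝ) ≤ 2 * L * (c3 * (c2 * h + εr) * h) :=
      mul_nonneg (mul_nonneg (by norm_num) hL.le) hq2
    have q4 : (0:ℝ) ≤ 2 * εrh := mul_nonneg (by norm_num) hεrh
    have q5 : (0:ℝ) ≤ 2 * (M₃ * h ^ 2) :=
      mul_nonneg (by norm_num) (mul_nonneg hM₃.le (sq_nonneg h))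
    have q6 : (0:ℝ) ≤ L * (M₂ * h ^ 2 / 4) := mul_nonneg hL.le q1
    linarith
  have k1 : (0:ℝ) ≤ h ^ 2 := sq_nonneg h
  have k2 : (0:ℝ) ≤ h * εr := mul_nonneg hh.le hεr
  have hgb : gg ≤ (L * M₂ + 2 * L * c3 * c2 + 2 * M₃ + 2 * L * c3 + 2)
      * (h ^ 2 + h * εr + εrh) := by
    rw [hgg]
    nlinarith [mul_nonneg (mul_pos hL hM₂).le k1, mul_nonneg (mul_pos hL hM₂).le k2,
      mul_nonneg (mul_pos hL hM₂).le hεrh,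
      mul_nonneg (mul_pos (mul_pos hL hc3p) hc2p).le k1,
      mul_nonneg (mul_pos (mul_pos hL hc3p) hc2p).le k2,
      mul_nonneg (mul_pos (mul_pos hL hc3p) hc2p).le hεrh,
      mul_nonneg hM₃.le k1, mul_nonneg hM₃.le k2, mul_nonneg hM₃.le hεrh,
      mul_nonneg (mul_pos hL hc3p).le k1, mul_nonneg (mul_pos hL hc3p).le k2,
      mul_nonneg (mul_pos hL hc3p).le hεrh]
  -- Lipschitz estimates along the exact solution
  have hGlip : ∀ s ∈ Icc t₀ t1, ∀ t ∈ Icc t₀ t1,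
      ‖F t (A t) - F s (A s)‖ ≤ M₂ * |t - s| := by
    intro s hs t ht
    have := Convex.norm_image_sub_le_of_norm_hasDerivWithin_le
      (f := fun u => F u (A u)) (f' := A₂) hA2' hA2b (convex_Icc _ _) hs ht
    simpa [Real.norm_eq_abs] using this
  have hA2lip : ∀ s ∈ Icc t₀ t1, ∀ t ∈ Icc t₀ t1, ‖A₂ t - A₂ s‖ ≤ M₃ * |t - s| := by
    intro s hs t ht
    have := Convex.norm_image_sub_le_of_norm_hasDerivWithin_le
      (f := A₂) (f' := A₃) hA3' hA3b (convex_Icc _ _) hs ht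
    simpa [Real.norm_eq_abs] using this
  -- transposed versions of the basis-capture facts
  have hV₀Vh : V₀ᵀ * (Vhat * Vhatᵀ) = V₀ᵀ := by
    have h1 := congrArg Matrix.transpose hVhV₀
    rwa [Matrix.transpose_mul, proj_symm] at h1
  have hVhVb : Vhatᵀ * (Vbar * Vbarᵀ) = Vhatᵀ := by
    have h1 := congrArg Matrix.transpose hVbVh
    rwa [Matrix.transpose_mul, proj_symm] at h1
  have hUhZb : Uhatᵀ * F th Yhalf * (Vbar * Vbarᵀ) = Uhatᵀ * F th Yhalf := by
    have h1 := congrArg Matrix.transpose hVbF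
    rwa [Matrix.transpose_mul, Matrix.transpose_mul, Matrix.transpose_transpose,
      proj_symm] at h1
  have hY₀l : Uhat * Uhatᵀ * Y₀ = Y₀ := by
    rw [hY₀, ← Matrix.mul_assoc, ← Matrix.mul_assoc, hUhU₀]
  have hY₀r : Y₀ * (Vhat * Vhatᵀ) = Y₀ := by
    rw [hY₀, Matrix.mul_assoc, hV₀Vh]
  have hUbU₀ : Ubar * Ubarᵀ * U₀ = U₀ := by
    have e : U₀ = Uhat * (Uhatᵀ * U₀) := by rw [← Matrix.mul_assoc, hUhU₀]
    rw [e, ← Matrix.mul_assoc, hUbUh]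
  have hV₀Vb : V₀ᵀ * (Vbar * Vbarᵀ) = V₀ᵀ := by
    calc V₀ᵀ * (Vbar * Vbarᵀ) = V₀ᵀ * (Vhat * Vhatᵀ) * (Vbar * Vbarᵀ) := by rw [hV₀Vh]
    _ = V₀ᵀ * (Vhat * (Vhatᵀ * (Vbar * Vbarᵀ))) := by
        rw [Matrix.mul_assoc, Matrix.mul_assoc]
    _ = V₀ᵀ * (Vhat * Vhatᵀ) := by rw [hVhVb]
    _ = V₀ᵀ := hV₀Vh
  have hY₀lb : Ubar * Ubarᵀ * Y₀ = Y₀ := by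
    rw [hY₀, ← Matrix.mul_assoc, ← Matrix.mul_assoc, hUbU₀]
  have hY₀rb : Y₀ * (Vbar * Vbarᵀ) = Y₀ := by
    rw [hY₀, Matrix.mul_assoc, hV₀Vb]
  -- ### K-step error
  have hKerr : ∀ t ∈ Icc t₀ th, ‖K t * V₀ᵀ - A t‖ ≤ c1 * h := by
    have hder : ∀ t ∈ Icc t₀ th, HasDerivWithinAt (fun τ => K τ * V₀ᵀ - A τ)
        (F t (K t * V₀ᵀ) * V₀ * V₀ᵀ - F t (A t)) (Icc t₀ th) t := fun t ht =>
      (hasDerivWithinAt_mulR V₀ᵀ (hK' t ht)).sub ((hA' t (hsub ht)).mono hsub)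
    have hbd : ∀ t ∈ Icc t₀ th,
        ‖F t (K t * V₀ᵀ) * V₀ * V₀ᵀ - F t (A t)‖ ≤ L * ‖K t * V₀ᵀ - A t‖ + B := by
      intro t ht
      have hid : F t (K t * V₀ᵀ) * V₀ * V₀ᵀ - F t (A t)
          = (F t (K t * V₀ᵀ) - F t (A t)) * (V₀ * V₀ᵀ) - F t (A t) * (1 - V₀ * V₀ᵀ) := by
        simp only [Matrix.mul_sub, Matrix.sub_mul, Matrix.mul_one, Matrix.one_mul,
          Matrix.mul_assoc]
        abel
      rw [hid]
      refine (norm_sub_le _ _).trans ?_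
      have h1 : ‖(F t (K t * V₀ᵀ) - F t (A t)) * (V₀ * V₀ᵀ)‖ ≤ L * ‖K t * V₀ᵀ - A t‖ :=
        (norm_mul_P_le hV₀ _).trans (hFlip t _ _)
      have h2 : ‖F t (A t) * (1 - V₀ * V₀ᵀ)‖ ≤ B := (norm_mul_oP_le hV₀ _).trans (hFb t _)
      linarith
    have h0 : K t₀ * V₀ᵀ - A t₀ = 0 := by rw [hK0, hAt₀, hY₀]; exact sub_self _
    have hg := gronwall_zero hL hB.le hder hbd h0
    intro t ht
    refine (hg t ht).trans ?_
    have hth0 : th - t₀ = h / 2 := by rw [hth]; ring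
    rw [hth0]
    calc B * (h / 2) * Real.exp (L * (h / 2)) ≤ B * (h / 2) * c3 :=
          mul_le_mul_of_nonneg_left hexp2 (by positivity)
    _ = B * c3 * (h / 2) := by ring
    _ ≤ B * c3 * h := mul_le_mul_of_nonneg_left (by linarith) (mul_nonneg hB.le hc3p.le)
    _ = c1 * h := by rw [hc1]
  -- ### L-step error
  have hLerr : ∀ t ∈ Icc t₀ th, ‖U₀ * (Lm t)ᵀ - A t‖ ≤ c1 * h := by
    have hder : ∀ t ∈ Icc t₀ th, HasDerivWithinAt (fun τ => U₀ * (Lm τ)ᵀ - A τ)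
        (U₀ * ((F t (U₀ * (Lm t)ᵀ))ᵀ * U₀)ᵀ - F t (A t)) (Icc t₀ th) t := fun t ht =>
      (hasDerivWithinAt_mulT U₀ (hLm' t ht)).sub ((hA' t (hsub ht)).mono hsub)
    have hbd : ∀ t ∈ Icc t₀ th,
        ‖U₀ * ((F t (U₀ * (Lm t)ᵀ))ᵀ * U₀)ᵀ - F t (A t)‖
          ≤ L * ‖U₀ * (Lm t)ᵀ - A t‖ + B := by
      intro t ht
      have hid : U₀ * ((F t (U₀ * (Lm t)ᵀ))ᵀ * U₀)ᵀ - F t (A t)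
          = U₀ * U₀ᵀ * (F t (U₀ * (Lm t)ᵀ) - F t (A t)) - (1 - U₀ * U₀ᵀ) * F t (A t) := by
        rw [Matrix.transpose_mul, Matrix.transpose_transpose]
        simp only [Matrix.mul_sub, Matrix.sub_mul, Matrix.mul_one, Matrix.one_mul,
          Matrix.mul_assoc]
        abel
      rw [hid]
      refine (norm_sub_le _ _).trans ?_
      have h1 : ‖U₀ * U₀ᵀ * (F t (U₀ * (Lm t)ᵀ) - F t (A t))‖ ≤ L * ‖U₀ * (Lm t)ᵀ - A t‖ :=
        (norm_P_mul_le hU₀ _).trans (hFlip t _ _)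
      have h2 : ‖(1 - U₀ * U₀ᵀ) * F t (A t)‖ ≤ B := (norm_oP_mul_le hU₀ _).trans (hFb t _)
      linarith
    have h0 : U₀ * (Lm t₀)ᵀ - A t₀ = 0 := by
      rw [hLm0, hAt₀, hY₀, Matrix.transpose_mul, Matrix.transpose_transpose,
        ← Matrix.mul_assoc]
      exact sub_self _
    have hg := gronwall_zero hL hB.le hder hbd h0
    intro t ht
    refine (hg t ht).trans ?_
    have hth0 : th - t₀ = h / 2 := by rw [hth]; ring
    rw [hth0]
    calc B * (h / 2) * Real.exp (L * (h / 2)) ≤ B * (h / 2) * c3 :=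
          mul_le_mul_of_nonneg_left hexp2 (by positivity)
    _ = B * c3 * (h / 2) := by ring
    _ ≤ B * c3 * h := mul_le_mul_of_nonneg_left (by linarith) (mul_nonneg hB.le hc3p.le)
    _ = c1 * h := by rw [hc1]
  -- ### the K-step captures the range: bound on `(1 - P_Uhat) F(t₀,Y₀) V₀`
  have hUC : ‖(1 - Uhat * Uhatᵀ) * (F t₀ Y₀ * V₀)‖ ≤ (L * c1 + M₂) * h := by
    obtain ⟨C0, hC0⟩ : ∃ X : Matrix (Fin m) (Fin r) ℝ, X = F t₀ Y₀ * V₀ := ⟨_, rfl⟩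
    rw [← hC0]
    obtain ⟨W, hWdef⟩ : ∃ f : ℝ → Matrix (Fin m) (Fin r) ℝ,
      f = fun τ => (1 - Uhat * Uhatᵀ) * (K τ - (τ - t₀) • C0) := ⟨_, rfl⟩
    have hWd : ∀ t ∈ Icc t₀ th, HasDerivWithinAt W
        ((1 - Uhat * Uhatᵀ) * (F t (K t * V₀ᵀ) * V₀ - C0)) (Icc t₀ th) t := by
      intro t ht
      have hsm : HasDerivWithinAt (fun τ : ℝ => (τ - t₀) • C0) ((1:ℝ) • C0) (Icc t₀ th) t :=
        ((hasDerivWithinAt_id t (Icc t₀ th)).sub_const t₀).smul_const C0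
      rw [one_smul] at hsm
      rw [hWdef]
      exact hasDerivWithinAt_mulL _ ((hK' t ht).sub hsm)
    have hWbd : ∀ t ∈ Icc t₀ th,
        ‖(1 - Uhat * Uhatᵀ) * (F t (K t * V₀ᵀ) * V₀ - C0)‖ ≤ (L * c1 + M₂) * h := by
      intro t ht
      refine (norm_oP_mul_le hUh _).trans ?_
      have hid : F t (K t * V₀ᵀ) * V₀ - C0 = (F t (K t * V₀ᵀ) - F t₀ (A t₀)) * V₀ := by
        rw [hC0, hAt₀, Matrix.sub_mul]
      rw [hid]
      refine (norm_mul_orth_le hV₀ _).trans ?_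
      have h1 : ‖F t (K t * V₀ᵀ) - F t (A t)‖ ≤ L * (c1 * h) :=
        (hFlip t _ _).trans (mul_le_mul_of_nonneg_left (hKerr t ht) hL.le)
      have h2 : ‖F t (A t) - F t₀ (A t₀)‖ ≤ M₂ * (h / 2) := by
        refine (hGlip t₀ ht₀m t (hsub ht)).trans ?_
        have habs : |t - t₀| ≤ h / 2 := by
          have h1' := ht.1
          have h2' := ht.2
          rw [hth] at h2'
          rw [abs_le]
          exact ⟨by linarith, by linarith⟩
        exact (mul_le_mul_of_nonneg_left habs hM₂.le)
      have h3 := norm_sub_le₃ (F t (K t * V₀ᵀ)) (F t (A t)) (F t₀ (A t₀))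
      have h4 : M₂ * (h / 2) ≤ M₂ * h := mul_le_mul_of_nonneg_left (by linarith) hM₂.le
      have h5 : L * (c1 * h) + M₂ * h = (L * c1 + M₂) * h := by ring
      linarith
    have hMVT := Convex.norm_image_sub_le_of_norm_hasDerivWithin_le
      (f := W) (f' := fun t => (1 - Uhat * Uhatᵀ) * (F t (K t * V₀ᵀ) * V₀ - C0))
      hWd hWbd (convex_Icc _ _) ht₀mh hthmh
    have hW0 : W t₀ = 0 := by
      rw [hWdef]
      show (1 - Uhat * Uhatᵀ) * (K t₀ - (t₀ - t₀) • C0) = 0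
      rw [sub_self, zero_smul, sub_zero, hK0, Matrix.sub_mul, Matrix.one_mul,
        ← Matrix.mul_assoc, hUhU₀]
      exact sub_self _
    have hWth : W th = -((h / 2) • ((1 - Uhat * Uhatᵀ) * C0)) := by
      rw [hWdef]
      show (1 - Uhat * Uhatᵀ) * (K th - (th - t₀) • C0) = _
      have hKoff : (1 - Uhat * Uhatᵀ) * K th = 0 := by
        rw [Matrix.sub_mul, Matrix.one_mul, hUhK]
        exact sub_self _
      have hth0 : th - t₀ = h / 2 := by rw [hth]; ring
      rw [hth0, Matrix.mul_sub, Matrix.mul_smul, hKoff, zero_sub]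
    rw [hW0, sub_zero, hWth, norm_neg, norm_smul, Real.norm_eq_abs,
      abs_of_pos (by linarith : (0:ℝ) < h / 2)] at hMVT
    have hthn : ‖th - t₀‖ = h / 2 := by
      rw [Real.norm_eq_abs, hth, show t₀ + h / 2 - t₀ = h / 2 by ring,
        abs_of_pos (by linarith : (0:ℝ) < h / 2)]
    rw [hthn] at hMVT
    rw [mul_comm ((L * c1 + M₂) * h) (h / 2)] at hMVT
    exact le_of_mul_le_mul_left hMVT (by linarith : (0:ℝ) < h / 2)
  -- ### the L-step captures the co-range
  have hVC : ‖(1 - Vhat * Vhatᵀ) * ((F t₀ Y₀)ᵀ * U₀)‖ ≤ (L * c1 + M₂) * h := by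
    obtain ⟨C0, hC0⟩ : ∃ X : Matrix (Fin n) (Fin r) ℝ, X = (F t₀ Y₀)ᵀ * U₀ := ⟨_, rfl⟩
    rw [← hC0]
    obtain ⟨W, hWdef⟩ : ∃ f : ℝ → Matrix (Fin n) (Fin r) ℝ,
      f = fun τ => (1 - Vhat * Vhatᵀ) * (Lm τ - (τ - t₀) • C0) := ⟨_, rfl⟩
    have hWd : ∀ t ∈ Icc t₀ th, HasDerivWithinAt W
        ((1 - Vhat * Vhatᵀ) * ((F t (U₀ * (Lm t)ᵀ))ᵀ * U₀ - C0)) (Icc t₀ th) t := by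
      intro t ht
      have hsm : HasDerivWithinAt (fun τ : ℝ => (τ - t₀) • C0) ((1:ℝ) • C0) (Icc t₀ th) t :=
        ((hasDerivWithinAt_id t (Icc t₀ th)).sub_const t₀).smul_const C0
      rw [one_smul] at hsm
      rw [hWdef]
      exact hasDerivWithinAt_mulL _ ((hLm' t ht).sub hsm)
    have hWbd : ∀ t ∈ Icc t₀ th,
        ‖(1 - Vhat * Vhatᵀ) * ((F t (U₀ * (Lm t)ᵀ))ᵀ * U₀ - C0)‖ ≤ (L * c1 + M₂) * h := by
      intro t ht
      refine (norm_oP_mul_le hVh _).trans ?_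
      have hid : (F t (U₀ * (Lm t)ᵀ))ᵀ * U₀ - C0
          = (F t (U₀ * (Lm t)ᵀ) - F t₀ (A t₀))ᵀ * U₀ := by
        rw [hC0, hAt₀, Matrix.transpose_sub, Matrix.sub_mul]
      rw [hid]
      refine (norm_mul_orth_le hU₀ _).trans ?_
      rw [Matrix.frobenius_norm_transpose]
      have h1 : ‖F t (U₀ * (Lm t)ᵀ) - F t (A t)‖ ≤ L * (c1 * h) :=
        (hFlip t _ _).trans (mul_le_mul_of_nonneg_left (hLerr t ht) hL.le)
      have h2 : ‖F t (A t) - F t₀ (A t₀)‖ ≤ M₂ * (h / 2) := by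
        refine (hGlip t₀ ht₀m t (hsub ht)).trans ?_
        have habs : |t - t₀| ≤ h / 2 := by
          have h1' := ht.1
          have h2' := ht.2
          rw [hth] at h2'
          rw [abs_le]
          exact ⟨by linarith, by linarith⟩
        exact (mul_le_mul_of_nonneg_left habs hM₂.le)
      have h3 := norm_sub_le₃ (F t (U₀ * (Lm t)ᵀ)) (F t (A t)) (F t₀ (A t₀))
      have h4 : M₂ * (h / 2) ≤ M₂ * h := mul_le_mul_of_nonneg_left (by linarith) hM₂.le
      have h5 : L * (c1 * h) + M₂ * h = (L * c1 + M₂) * h := by ring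
      linarith
    have hMVT := Convex.norm_image_sub_le_of_norm_hasDerivWithin_le
      (f := W) (f' := fun t => (1 - Vhat * Vhatᵀ) * ((F t (U₀ * (Lm t)ᵀ))ᵀ * U₀ - C0))
      hWd hWbd (convex_Icc _ _) ht₀mh hthmh
    have hW0 : W t₀ = 0 := by
      rw [hWdef]
      show (1 - Vhat * Vhatᵀ) * (Lm t₀ - (t₀ - t₀) • C0) = 0
      rw [sub_self, zero_smul, sub_zero, hLm0, Matrix.sub_mul, Matrix.one_mul,
        ← Matrix.mul_assoc, hVhV₀]
      exact sub_self _
    have hWth : W th = -((h / 2) • ((1 - Vhat * Vhatᵀ) * C0)) := by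
      rw [hWdef]
      show (1 - Vhat * Vhatᵀ) * (Lm th - (th - t₀) • C0) = _
      have hKoff : (1 - Vhat * Vhatᵀ) * Lm th = 0 := by
        rw [Matrix.sub_mul, Matrix.one_mul, hVhL]
        exact sub_self _
      have hth0 : th - t₀ = h / 2 := by rw [hth]; ring
      rw [hth0, Matrix.mul_sub, Matrix.mul_smul, hKoff, zero_sub]
    rw [hW0, sub_zero, hWth, norm_neg, norm_smul, Real.norm_eq_abs,
      abs_of_pos (by linarith : (0:ℝ) < h / 2)] at hMVT
    have hthn : ‖th - t₀‖ = h / 2 := by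
      rw [Real.norm_eq_abs, hth, show t₀ + h / 2 - t₀ = h / 2 by ring,
        abs_of_pos (by linarith : (0:ℝ) < h / 2)]
    rw [hthn] at hMVT
    rw [mul_comm ((L * c1 + M₂) * h) (h / 2)] at hMVT
    exact le_of_mul_le_mul_left hMVT (by linarith : (0:ℝ) < h / 2)
  -- ### normal bound for the augmented basis, left
  have hGU : ∀ t ∈ Icc t₀ t1, ‖(1 - Uhat * Uhatᵀ) * F t (A t)‖ ≤ c2 * h + εr := by
    intro t ht
    have hid : (1 - Uhat * Uhatᵀ) * F t (A t)
        = (1 - Uhat * Uhatᵀ) * (F t (A t) - F t₀ (A t₀))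
          + ((1 - Uhat * Uhatᵀ) * (F t₀ (A t₀) * V₀)) * V₀ᵀ
          + (1 - Uhat * Uhatᵀ) * (F t₀ (A t₀) * (1 - V₀ * V₀ᵀ)) := by
      simp only [Matrix.mul_sub, Matrix.sub_mul, Matrix.mul_one, Matrix.one_mul,
        Matrix.mul_assoc]
      abel
    rw [hid]
    refine le_trans (le_trans (norm_add_le _ _) (add_le_add_left (norm_add_le _ _) _)) ?_
    have h1 : ‖(1 - Uhat * Uhatᵀ) * (F t (A t) - F t₀ (A t₀))‖ ≤ M₂ * h := by
      refine (norm_oP_mul_le hUh _).trans ((hGlip t₀ ht₀m t ht).trans ?_)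
      have habs : |t - t₀| ≤ h := by
        have h1' := ht.1
        have h2' := ht.2
        rw [ht1] at h2'
        rw [abs_le]
        exact ⟨by linarith, by linarith⟩
      exact (mul_le_mul_of_nonneg_left habs hM₂.le)
    have h2 : ‖((1 - Uhat * Uhatᵀ) * (F t₀ (A t₀) * V₀)) * V₀ᵀ‖ ≤ (L * c1 + M₂) * h := by
      rw [norm_mul_orthT hV₀, hAt₀]
      exact hUC
    have h3 : ‖(1 - Uhat * Uhatᵀ) * (F t₀ (A t₀) * (1 - V₀ * V₀ᵀ))‖ ≤ εr := by
      have habs : (1 - Uhat * Uhatᵀ) * (F t₀ (A t₀) * (1 - V₀ * V₀ᵀ))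
          = (1 - Uhat * Uhatᵀ) * ((1 - U₀ * U₀ᵀ) * (F t₀ (A t₀) * (1 - V₀ * V₀ᵀ))) := by
        conv_rhs => rw [← Matrix.mul_assoc, oproj_absorb hUhU₀]
      rw [habs]
      refine (norm_oP_mul_le hUh _).trans ?_
      have hb := hNr t₀ ht₀m U₀ V₀ S₀ hU₀ hV₀
      rw [hAt₀, hY₀, ← Matrix.mul_assoc]
      exact hb
    rw [hc2]
    linarith
  -- ### normal bound for the augmented basis, right
  have hGV : ∀ t ∈ Icc t₀ t1, ‖F t (A t) * (1 - Vhat * Vhatᵀ)‖ ≤ c2 * h + εr := by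
    intro t ht
    rw [← Matrix.frobenius_norm_transpose (F t (A t) * (1 - Vhat * Vhatᵀ)),
      Matrix.transpose_mul, oproj_symm]
    have hid : (1 - Vhat * Vhatᵀ) * (F t (A t))ᵀ
        = (1 - Vhat * Vhatᵀ) * ((F t (A t))ᵀ - (F t₀ (A t₀))ᵀ)
          + ((1 - Vhat * Vhatᵀ) * ((F t₀ (A t₀))ᵀ * U₀)) * U₀ᵀ
          + (1 - Vhat * Vhatᵀ) * ((F t₀ (A t₀))ᵀ * (1 - U₀ * U₀ᵀ)) := by
      simp only [Matrix.mul_sub, Matrix.sub_mul, Matrix.mul_one, Matrix.one_mul,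
        Matrix.mul_assoc]
      abel
    rw [hid]
    refine le_trans (le_trans (norm_add_le _ _) (add_le_add_left (norm_add_le _ _) _)) ?_
    have h1 : ‖(1 - Vhat * Vhatᵀ) * ((F t (A t))ᵀ - (F t₀ (A t₀))ᵀ)‖ ≤ M₂ * h := by
      refine (norm_oP_mul_le hVh _).trans ?_
      rw [← Matrix.transpose_sub, Matrix.frobenius_norm_transpose]
      refine (hGlip t₀ ht₀m t ht).trans ?_
      have habs : |t - t₀| ≤ h := by
        have h1' := ht.1
        have h2' := ht.2
        rw [ht1] at h2'
        rw [abs_le]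
        exact ⟨by linarith, by linarith⟩
      exact (mul_le_mul_of_nonneg_left habs hM₂.le)
    have h2 : ‖((1 - Vhat * Vhatᵀ) * ((F t₀ (A t₀))ᵀ * U₀)) * U₀ᵀ‖ ≤ (L * c1 + M₂) * h := by
      rw [norm_mul_orthT hU₀, hAt₀]
      exact hVC
    have h3 : ‖(1 - Vhat * Vhatᵀ) * ((F t₀ (A t₀))ᵀ * (1 - U₀ * U₀ᵀ))‖ ≤ εr := by
      have habs : (1 - Vhat * Vhatᵀ) * ((F t₀ (A t₀))ᵀ * (1 - U₀ * U₀ᵀ))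
          = (1 - Vhat * Vhatᵀ) * ((1 - V₀ * V₀ᵀ) * ((F t₀ (A t₀))ᵀ * (1 - U₀ * U₀ᵀ))) := by
        conv_rhs => rw [← Matrix.mul_assoc, oproj_absorb hVhV₀]
      rw [habs]
      refine (norm_oP_mul_le hVh _).trans ?_
      have htr : (1 - V₀ * V₀ᵀ) * ((F t₀ (A t₀))ᵀ * (1 - U₀ * U₀ᵀ))
          = ((1 - U₀ * U₀ᵀ) * F t₀ (A t₀) * (1 - V₀ * V₀ᵀ))ᵀ := by
        rw [Matrix.transpose_mul, Matrix.transpose_mul, oproj_symm, oproj_symm]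
      rw [htr, Matrix.frobenius_norm_transpose]
      have hb := hNr t₀ ht₀m U₀ V₀ S₀ hU₀ hV₀
      rw [hAt₀, hY₀]
      exact hb
    rw [hc2]
    linarith
  -- ### half-step error
  have hehalf : ∀ t ∈ Icc t₀ th,
      ‖Uhat * Shat t * Vhatᵀ - A t‖ ≤ c3 * (c2 * h + εr) * h := by
    have hder : ∀ t ∈ Icc t₀ th, HasDerivWithinAt (fun τ => Uhat * Shat τ * Vhatᵀ - A τ)
        (Uhat * (Uhatᵀ * F t (Uhat * Shat t * Vhatᵀ) * Vhat) * Vhatᵀ - F t (A t))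
        (Icc t₀ th) t := fun t ht =>
      (hasDerivWithinAt_mulLR Uhat Vhatᵀ (hSh' t ht)).sub ((hA' t (hsub ht)).mono hsub)
    have hbd : ∀ t ∈ Icc t₀ th,
        ‖Uhat * (Uhatᵀ * F t (Uhat * Shat t * Vhatᵀ) * Vhat) * Vhatᵀ - F t (A t)‖
          ≤ L * ‖Uhat * Shat t * Vhatᵀ - A t‖ + 2 * (c2 * h + εr) := by
      intro t ht
      have hid : Uhat * (Uhatᵀ * F t (Uhat * Shat t * Vhatᵀ) * Vhat) * Vhatᵀ - F t (A t)
          = Uhat * Uhatᵀ * ((F t (Uhat * Shat t * Vhatᵀ) - F t (A t)) * (Vhat * Vhatᵀ))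
            - (1 - Uhat * Uhatᵀ) * F t (A t)
            - Uhat * Uhatᵀ * (F t (A t) * (1 - Vhat * Vhatᵀ)) := by
        simp only [Matrix.mul_sub, Matrix.sub_mul, Matrix.mul_one, Matrix.one_mul,
          Matrix.mul_assoc]
        abel
      rw [hid]
      refine le_trans (norm_sub_le _ _) (le_trans (add_le_add_left (norm_sub_le _ _) _) ?_)
      have h1 : ‖Uhat * Uhatᵀ * ((F t (Uhat * Shat t * Vhatᵀ) - F t (A t)) * (Vhat * Vhatᵀ))‖
          ≤ L * ‖Uhat * Shat t * Vhatᵀ - A t‖ :=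
        (norm_P_mul_le hUh _).trans ((norm_mul_P_le hVh _).trans (hFlip t _ _))
      have h2 : ‖(1 - Uhat * Uhatᵀ) * F t (A t)‖ ≤ c2 * h + εr := hGU t (hsub ht)
      have h3 : ‖Uhat * Uhatᵀ * (F t (A t) * (1 - Vhat * Vhatᵀ))‖ ≤ c2 * h + εr :=
        (norm_P_mul_le hUh _).trans (hGV t (hsub ht))
      linarith
    have h0 : Uhat * Shat t₀ * Vhatᵀ - A t₀ = 0 := by
      rw [hSh0, hAt₀]
      have hYid : Uhat * (Uhatᵀ * Y₀ * Vhat) * Vhatᵀ = Y₀ := by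
        simp only [← Matrix.mul_assoc]
        rw [hY₀l, Matrix.mul_assoc, hY₀r]
      rw [hYid]
      exact sub_self _
    have hεpos : (0:ℝ) ≤ 2 * (c2 * h + εr) := mul_nonneg (by norm_num) hcε
    have hg := gronwall_zero hL hεpos hder hbd h0
    intro t ht
    refine (hg t ht).trans ?_
    have hth0 : th - t₀ = h / 2 := by rw [hth]; ring
    rw [hth0]
    have hx : (0:ℝ) ≤ (c2 * h + εr) * h := mul_nonneg hcε hh.le
    calc 2 * (c2 * h + εr) * (h / 2) * Real.exp (L * (h / 2))
        = ((c2 * h + εr) * h) * Real.exp (L * (h / 2)) := by ring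
    _ ≤ ((c2 * h + εr) * h) * c3 := mul_le_mul_of_nonneg_left hexp2 hx
    _ = c3 * (c2 * h + εr) * h := by ring
  have hδ : ‖Yhalf - A th‖ ≤ c3 * (c2 * h + εr) * h := by
    rw [hYh]; exact hehalf th hthmh
  -- ### projection defect of the doubly augmented basis at the midpoint
  have hN : ‖(1 - Uhat * Uhatᵀ) * F th Yhalf * (1 - Vhat * Vhatᵀ)‖ ≤ εrh := by
    have hb := hNrh th hthm Uhat Vhat (Shat th) hUh hVh
    rwa [← hYh] at hb
  have hz1 : (1 - Ubar * Ubarᵀ) * (F th Yhalf * Vhat) = 0 := by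
    rw [Matrix.sub_mul, Matrix.one_mul, hUbF]
    exact sub_self _
  have hz2 : Uhatᵀ * F th Yhalf * (1 - Vbar * Vbarᵀ) = 0 := by
    rw [Matrix.mul_sub, Matrix.mul_one, hUhZb]
    exact sub_self _
  have hZproj : ‖F th Yhalf - Ubar * Ubarᵀ * F th Yhalf * (Vbar * Vbarᵀ)‖ ≤ 2 * εrh := by
    have hid : F th Yhalf - Ubar * Ubarᵀ * F th Yhalf * (Vbar * Vbarᵀ)
        = (1 - Ubar * Ubarᵀ) * F th Yhalf
          + Ubar * Ubarᵀ * (F th Yhalf * (1 - Vbar * Vbarᵀ)) := by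
      simp only [Matrix.mul_sub, Matrix.sub_mul, Matrix.mul_one, Matrix.one_mul,
        Matrix.mul_assoc]
      abel
    rw [hid]
    refine (norm_add_le _ _).trans ?_
    have key0 : (1 - Ubar * Ubarᵀ) * (F th Yhalf * (Vhat * Vhatᵀ)) = 0 := by
      rw [← Matrix.mul_assoc (F th Yhalf) Vhat Vhatᵀ, ← Matrix.mul_assoc, hz1,
        Matrix.zero_mul]
    have hT1 : ‖(1 - Ubar * Ubarᵀ) * F th Yhalf‖ ≤ εrh := by
      have he1 : (1 - Ubar * Ubarᵀ) * F th Yhalf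
          = (1 - Ubar * Ubarᵀ) * ((1 - Uhat * Uhatᵀ) * F th Yhalf * (1 - Vhat * Vhatᵀ)) := by
        calc (1 - Ubar * Ubarᵀ) * F th Yhalf
            = (1 - Ubar * Ubarᵀ) * (F th Yhalf * (1 - Vhat * Vhatᵀ)) := by
              rw [Matrix.mul_sub (F th Yhalf), Matrix.mul_one, Matrix.mul_sub, key0, sub_zero]
        _ = ((1 - Ubar * Ubarᵀ) * (1 - Uhat * Uhatᵀ)) * (F th Yhalf * (1 - Vhat * Vhatᵀ)) := by
              rw [oproj_absorb hUbUh]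
        _ = (1 - Ubar * Ubarᵀ) * ((1 - Uhat * Uhatᵀ) * F th Yhalf * (1 - Vhat * Vhatᵀ)) := by
              rw [Matrix.mul_assoc, ← Matrix.mul_assoc (1 - Uhat * Uhatᵀ) (F th Yhalf)
                (1 - Vhat * Vhatᵀ)]
      rw [he1]
      exact (norm_oP_mul_le hUb _).trans hN
    have hT2 : ‖Ubar * Ubarᵀ * (F th Yhalf * (1 - Vbar * Vbarᵀ))‖ ≤ εrh := by
      have he2 : F th Yhalf * (1 - Vbar * Vbarᵀ)
          = ((1 - Uhat * Uhatᵀ) * F th Yhalf * (1 - Vhat * Vhatᵀ)) * (1 - Vbar * Vbarᵀ) := by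
        calc F th Yhalf * (1 - Vbar * Vbarᵀ)
            = (1 - Uhat * Uhatᵀ) * (F th Yhalf * (1 - Vbar * Vbarᵀ)) := by
              conv_rhs => rw [Matrix.sub_mul, Matrix.one_mul,
                Matrix.mul_assoc Uhat Uhatᵀ (F th Yhalf * (1 - Vbar * Vbarᵀ)),
                ← Matrix.mul_assoc Uhatᵀ (F th Yhalf) (1 - Vbar * Vbarᵀ), hz2,
                Matrix.mul_zero, sub_zero]
        _ = ((1 - Uhat * Uhatᵀ) * F th Yhalf) * ((1 - Vhat * Vhatᵀ) * (1 - Vbar * Vbarᵀ)) := by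
              rw [oproj_absorb' hVbVh, Matrix.mul_assoc]
        _ = ((1 - Uhat * Uhatᵀ) * F th Yhalf * (1 - Vhat * Vhatᵀ)) * (1 - Vbar * Vbarᵀ) :=
              (Matrix.mul_assoc _ _ _).symm
      rw [he2]
      exact (norm_P_mul_le hUb _).trans ((norm_mul_oP_le hVb _).trans hN)
    linarith
  -- ### projection defect at the exact midpoint value
  have hGmid : ‖F th (A th) - Ubar * Ubarᵀ * F th (A th) * (Vbar * Vbarᵀ)‖
      ≤ 2 * L * (c3 * (c2 * h + εr) * h) + 2 * εrh := by
    have hid : F th (A th) - Ubar * Ubarᵀ * F th (A th) * (Vbar * Vbarᵀ)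
        = ((F th (A th) - F th Yhalf)
            - Ubar * Ubarᵀ * (F th (A th) - F th Yhalf) * (Vbar * Vbarᵀ))
          + (F th Yhalf - Ubar * Ubarᵀ * F th Yhalf * (Vbar * Vbarᵀ)) := by
      simp only [Matrix.mul_sub, Matrix.sub_mul, Matrix.mul_assoc]
      abel
    rw [hid]
    refine (norm_add_le _ _).trans ?_
    have hL1 : ‖F th (A th) - F th Yhalf‖ ≤ L * (c3 * (c2 * h + εr) * h) := by
      refine (hFlip th _ _).trans ?_
      rw [norm_sub_rev]
      exact mul_le_mul_of_nonneg_left hδ hL.le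
    have hL2 : ‖Ubar * Ubarᵀ * (F th (A th) - F th Yhalf) * (Vbar * Vbarᵀ)‖
        ≤ L * (c3 * (c2 * h + εr) * h) :=
      (norm_mul_P_le hVb _).trans ((norm_P_mul_le hUb _).trans hL1)
    have h4 := norm_sub_le (F th (A th) - F th Yhalf)
      (Ubar * Ubarᵀ * (F th (A th) - F th Yhalf) * (Vbar * Vbarᵀ))
    linarith
  -- ### Taylor remainder bound
  have hRbd : ∀ t ∈ Icc t₀ t1,
      ‖F t (A t) - F th (A th) - (t - th) • A₂ th‖ ≤ M₃ * h ^ 2 := by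
    have hder : ∀ t ∈ Icc t₀ t1, HasDerivWithinAt
        (fun τ => F τ (A τ) - F th (A th) - (τ - th) • A₂ th) (A₂ t - A₂ th)
        (Icc t₀ t1) t := by
      intro t ht
      have hsm : HasDerivWithinAt (fun τ : ℝ => (τ - th) • A₂ th) ((1:ℝ) • A₂ th)
          (Icc t₀ t1) t :=
        ((hasDerivWithinAt_id t (Icc t₀ t1)).sub_const th).smul_const (A₂ th)
      rw [one_smul] at hsm
      exact ((hA2' t ht).sub_const (F th (A th))).sub hsm
    have hbd : ∀ t ∈ Icc t₀ t1, ‖A₂ t - A₂ th‖ ≤ M₃ * h := by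
      intro t ht
      refine (hA2lip th hthm t ht).trans ?_
      have habs : |t - th| ≤ h := by
        rw [abs_le]
        have h1 := ht.1; have h2 := ht.2
        rw [ht1] at h2
        constructor <;> (rw [hth]; linarith)
      exact mul_le_mul_of_nonneg_left habs hM₃.le
    intro t ht
    have hMVT := Convex.norm_image_sub_le_of_norm_hasDerivWithin_le
      (f := fun τ => F τ (A τ) - F th (A th) - (τ - th) • A₂ th)
      (f' := fun t => A₂ t - A₂ th) hder hbd (convex_Icc _ _) hthm ht
    have hfth : F th (A th) - F th (A th) - (th - th) • A₂ th = 0 := by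
      simp
    rw [hfth, sub_zero] at hMVT
    refine hMVT.trans ?_
    have habs : ‖t - th‖ ≤ h := by
      rw [Real.norm_eq_abs, abs_le]
      have h1 := ht.1; have h2 := ht.2
      rw [ht1] at h2
      constructor <;> (rw [hth]; linarith)
    calc M₃ * h * ‖t - th‖ ≤ M₃ * h * h :=
          mul_le_mul_of_nonneg_left habs (by positivity)
    _ = M₃ * h ^ 2 := by ring
  -- ### final Grönwall argument with midpoint cancellation
  obtain ⟨D, hD⟩ : ∃ X : Matrix (Fin m) (Fin n) ℝ,
    X = A₂ th - Ubar * Ubarᵀ * A₂ th * (Vbar * Vbarᵀ) := ⟨_, rfl⟩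
  have hDn : ‖D‖ ≤ 2 * M₂ := by
    rw [hD]
    refine (norm_sub_le _ _).trans ?_
    have h1 : ‖A₂ th‖ ≤ M₂ := hA2b th hthm
    have h2 : ‖Ubar * Ubarᵀ * A₂ th * (Vbar * Vbarᵀ)‖ ≤ M₂ :=
      (norm_mul_P_le hVb _).trans ((norm_P_mul_le hUb _).trans h1)
    linarith
  have hψn : ∀ t ∈ Icc t₀ t1, ‖((t - th) ^ 2 / 2 - h ^ 2 / 8) • D‖ ≤ M₂ * h ^ 2 / 4 := by
    intro t ht
    rw [norm_smul, Real.norm_eq_abs]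
    have habs2 : |t - th| ≤ h / 2 := by
      rw [abs_le]
      have h1 := ht.1; have h2 := ht.2
      rw [ht1] at h2
      constructor <;> (rw [hth]; linarith)
    have h1 : |(t - th) ^ 2 / 2 - h ^ 2 / 8| ≤ h ^ 2 / 8 := by
      have hp := abs_le.mp habs2
      have hsq : (t - th) ^ 2 ≤ (h / 2) ^ 2 := sq_le_sq' hp.1 hp.2
      have hq : (h / 2) ^ 2 = h ^ 2 / 4 := by ring
      rw [abs_le]
      constructor
      · linarith [sq_nonneg (t - th)]
      · linarith
    calc |(t - th) ^ 2 / 2 - h ^ 2 / 8| * ‖D‖ ≤ h ^ 2 / 8 * (2 * M₂) :=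
          mul_le_mul h1 hDn (norm_nonneg _) (by positivity)
    _ = M₂ * h ^ 2 / 4 := by ring
  obtain ⟨w, hwdef⟩ : ∃ f : ℝ → Matrix (Fin m) (Fin n) ℝ,
    f = fun τ => (Ubar * Sbar τ * Vbarᵀ - A τ) + ((τ - th) ^ 2 / 2 - h ^ 2 / 8) • D :=
      ⟨_, rfl⟩
  have hwd : ∀ t ∈ Icc t₀ t1, HasDerivWithinAt w
      ((Ubar * (Ubarᵀ * F t (Ubar * Sbar t * Vbarᵀ) * Vbar) * Vbarᵀ - F t (A t))
        + (t - th) • D) (Icc t₀ t1) t := by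
    intro t ht
    have h0 : HasDerivWithinAt (fun τ : ℝ => τ - th) 1 (Icc t₀ t1) t :=
      (hasDerivWithinAt_id t _).sub_const th
    have h1 : HasDerivWithinAt (fun τ : ℝ => (τ - th) ^ 2) (2 * (t - th)) (Icc t₀ t1) t := by
      have h1' := h0.pow 2
      norm_num at h1'
      exact h1'
    have h2 : HasDerivWithinAt (fun τ : ℝ => (τ - th) ^ 2 / 2 - h ^ 2 / 8) (t - th)
        (Icc t₀ t1) t := by
      have h2' := (h1.div_const 2).sub_const (h ^ 2 / 8)
      have he : 2 * (t - th) / 2 = t - th := by ring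
      rw [he] at h2'
      exact h2'
    rw [hwdef]
    exact ((hasDerivWithinAt_mulLR Ubar Vbarᵀ (hSb' t ht)).sub (hA' t ht)).add
      (h2.smul_const D)
  have hwbd : ∀ t ∈ Icc t₀ t1,
      ‖(Ubar * (Ubarᵀ * F t (Ubar * Sbar t * Vbarᵀ) * Vbar) * Vbarᵀ - F t (A t))
        + (t - th) • D‖ ≤ L * ‖w t‖ + gg := by
    intro t ht
    have hid : (Ubar * (Ubarᵀ * F t (Ubar * Sbar t * Vbarᵀ) * Vbar) * Vbarᵀ - F t (A t))
        + (t - th) • D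
        = Ubar * Ubarᵀ * ((F t (Ubar * Sbar t * Vbarᵀ) - F t (A t)) * (Vbar * Vbarᵀ))
          - (F th (A th) - Ubar * Ubarᵀ * F th (A th) * (Vbar * Vbarᵀ))
          - ((F t (A t) - F th (A th) - (t - th) • A₂ th)
            - Ubar * Ubarᵀ * (F t (A t) - F th (A th) - (t - th) • A₂ th)
              * (Vbar * Vbarᵀ)) := by
      rw [hD]
      simp only [Matrix.mul_sub, Matrix.sub_mul, Matrix.mul_assoc, Matrix.mul_smul,
        Matrix.smul_mul, smul_sub, Matrix.mul_one, Matrix.one_mul]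
      abel
    rw [hid]
    have ha : ‖Ubar * Ubarᵀ * ((F t (Ubar * Sbar t * Vbarᵀ) - F t (A t)) * (Vbar * Vbarᵀ))‖
        ≤ L * ‖w t‖ + L * (M₂ * h ^ 2 / 4) := by
      refine (norm_P_mul_le hUb _).trans ((norm_mul_P_le hVb _).trans
        ((hFlip t _ _).trans ?_))
      have he : Ubar * Sbar t * Vbarᵀ - A t = w t - ((t - th) ^ 2 / 2 - h ^ 2 / 8) • D := by
        rw [hwdef]
        show _ = (Ubar * Sbar t * Vbarᵀ - A t) + ((t - th) ^ 2 / 2 - h ^ 2 / 8) • D - _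
        abel
      rw [he]
      have hnb := (norm_sub_le (w t) (((t - th) ^ 2 / 2 - h ^ 2 / 8) • D)).trans
        (add_le_add le_rfl (hψn t ht))
      refine (mul_le_mul_of_nonneg_left hnb hL.le).trans (le_of_eq ?_)
      ring
    have hc : ‖(F t (A t) - F th (A th) - (t - th) • A₂ th)
        - Ubar * Ubarᵀ * (F t (A t) - F th (A th) - (t - th) • A₂ th) * (Vbar * Vbarᵀ)‖
        ≤ 2 * (M₃ * h ^ 2) := by
      refine (norm_sub_le _ _).trans ?_
      have hr1 := hRbd t ht
      have hr2 : ‖Ubar * Ubarᵀ * (F t (A t) - F th (A th) - (t - th) • A₂ th)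
          * (Vbar * Vbarᵀ)‖ ≤ M₃ * h ^ 2 :=
        (norm_mul_P_le hVb _).trans ((norm_P_mul_le hUb _).trans hr1)
      linarith
    refine le_trans (norm_sub_le _ _) (le_trans (add_le_add_left (norm_sub_le _ _) _) ?_)
    rw [hgg]
    linarith [ha, hGmid, hc]
  have hw0 : w t₀ = 0 := by
    rw [hwdef]
    show (Ubar * Sbar t₀ * Vbarᵀ - A t₀) + ((t₀ - th) ^ 2 / 2 - h ^ 2 / 8) • D = 0
    have h1 : Ubar * Sbar t₀ * Vbarᵀ = Y₀ := by
      rw [hSb0]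
      simp only [← Matrix.mul_assoc]
      rw [hY₀lb, Matrix.mul_assoc, hY₀rb]
    have h2 : (t₀ - th) ^ 2 / 2 - h ^ 2 / 8 = 0 := by rw [hth]; ring
    rw [h1, hAt₀, sub_self, h2, zero_smul, add_zero]
  have hgron := gronwall_zero hL hggpos hwd hwbd hw0
  have hfin1 := hgron t1 ⟨h0t1, le_rfl⟩
  have hwt1 : w t1 = Ybar₁ - A t1 := by
    rw [hwdef]
    show (Ubar * Sbar t1 * Vbarᵀ - A t1) + ((t1 - th) ^ 2 / 2 - h ^ 2 / 8) • D = _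
    have h2 : (t1 - th) ^ 2 / 2 - h ^ 2 / 8 = 0 := by rw [ht1, hth]; ring
    rw [h2, zero_smul, add_zero, ← hYb]
  rw [hwt1] at hfin1
  have hba : t1 - t₀ = h := by rw [ht1]; ring
  rw [hba] at hfin1
  refine hfin1.trans ?_
  calc gg * h * Real.exp (L * h) ≤ gg * h * c3 :=
        mul_le_mul_of_nonneg_left hexp1 (mul_nonneg hggpos hh.le)
  _ ≤ ((L * M₂ + 2 * L * c3 * c2 + 2 * M₃ + 2 * L * c3 + 2) * (h ^ 2 + h * εr + εrh))
      * h * c3 :=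
        mul_le_mul_of_nonneg_right (mul_le_mul_of_nonneg_right hgb hh.le) hc3p.le
  _ = c3 * (L * M₂ + 2 * L * c3 * c2 + 2 * M₃ + 2 * L * c3 + 2) * h
      * (h ^ 2 + h * εr + εrh) := by ring
end

section
/- (Energy dissipation of the Galerkin step for gradient systems.) Let E : ℝ^{m×n} → ℝ be differentiable and let F : ℝ^{m×n} → ℝ^{m×n} satisfy, for all Y, Z ∈ ℝ^{m×n}, DE(Y)[Z] = −trace(F(Y)ᵀ Z) (i.e., F(Y) = −∇E(Y) with respect to the Frobenius inner product). Let Ū ∈ ℝ^{m×p}, V̄ ∈ ℝ^{n×p} have orthonormal columns and let S̄ : [t₀, t₁] → ℝ^{p×p} be differentiable with S̄'(t) = Ūᵀ F(Ū S̄(t) V̄ᵀ) V̄. Then the function t ↦ E(Ū S̄(t) V̄ᵀ) is nonincreasing on [t₀, t₁]; indeed its derivative equals −‖S̄'(t)‖² ≤ 0. -/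
open Matrix Set

attribute [local instance] Matrix.frobeniusNormedAddCommGroup Matrix.frobeniusNormedSpace

lemma frob_norm_sq_eq_trace {p : ℕ} (A : Matrix (Fin p) (Fin p) ℝ) :
    ‖A‖ ^ 2 = Matrix.trace (Aᵀ * A) := by
  have h : (0:ℝ) ≤ ∑ i, ∑ j, ‖A i j‖ ^ (2:ℝ) := by positivity
  rw [Matrix.frobenius_norm_def, ← Real.rpow_natCast _ 2, ← Real.rpow_mul h]
  norm_num
  rw [Finset.sum_comm]
  simp [Matrix.trace, Matrix.diag, Matrix.mul_apply, sq, mul_comm]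

/-- Energy dissipation of the Galerkin step for gradient systems: if `F(Y) = −∇E(Y)`
with respect to the Frobenius inner product (i.e. `DE(Y)[Z] = −trace(F(Y)ᵀ Z)`), then
along the Galerkin S-step `S̄' = Ūᵀ F(Ū S̄ V̄ᵀ) V̄` the energy `t ↦ E(Ū S̄(t) V̄ᵀ)` is
nonincreasing; indeed its derivative equals `−‖S̄'(t)‖² ≤ 0`. -/
theorem galerkin_energy_dissipation (m n p : ℕ) (t₀ t₁ : ℝ) (ht : t₀ ≤ t₁)
    (E : Matrix (Fin m) (Fin n) ℝ → ℝ)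
    (E' : Matrix (Fin m) (Fin n) ℝ → (Matrix (Fin m) (Fin n) ℝ →L[ℝ] ℝ))
    (hE : ∀ Y : Matrix (Fin m) (Fin n) ℝ, HasFDerivAt E (E' Y) Y)
    (F : Matrix (Fin m) (Fin n) ℝ → Matrix (Fin m) (Fin n) ℝ)
    (hF : ∀ Y Z : Matrix (Fin m) (Fin n) ℝ, E' Y Z = -Matrix.trace ((F Y)ᵀ * Z))
    (Ubar : Matrix (Fin m) (Fin p) ℝ) (Vbar : Matrix (Fin n) (Fin p) ℝ)
    (hU : Ubarᵀ * Ubar = 1) (hV : Vbarᵀ * Vbar = 1)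
    (Sbar : ℝ → Matrix (Fin p) (Fin p) ℝ)
    (hSbar : ∀ t ∈ Icc t₀ t₁,
      HasDerivWithinAt Sbar (Ubarᵀ * F (Ubar * Sbar t * Vbarᵀ) * Vbar) (Icc t₀ t₁) t) :
    AntitoneOn (fun t => E (Ubar * Sbar t * Vbarᵀ)) (Icc t₀ t₁) ∧
    ∀ t ∈ Icc t₀ t₁,
      HasDerivWithinAt (fun s => E (Ubar * Sbar s * Vbarᵀ))
        (-‖Ubarᵀ * F (Ubar * Sbar t * Vbarᵀ) * Vbar‖ ^ 2) (Icc t₀ t₁) t := by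
  -- the sandwich map S ↦ Ū S V̄ᵀ as a continuous linear map
  let L : Matrix (Fin p) (Fin p) ℝ →ₗ[ℝ] Matrix (Fin m) (Fin n) ℝ :=
    { toFun := fun S => Ubar * S * Vbarᵀ
      map_add' := fun X Y => by simp [Matrix.add_mul, Matrix.mul_add]
      map_smul' := fun c X => by simp [Matrix.mul_smul, Matrix.smul_mul] }
  have hderiv : ∀ t ∈ Icc t₀ t₁,
      HasDerivWithinAt (fun s => E (Ubar * Sbar s * Vbarᵀ))
        (-‖Ubarᵀ * F (Ubar * Sbar t * Vbarᵀ) * Vbar‖ ^ 2) (Icc t₀ t₁) t := by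
    intro t htmem
    set S' := Ubarᵀ * F (Ubar * Sbar t * Vbarᵀ) * Vbar with hS'
    have hL : HasDerivWithinAt (fun s => Ubar * Sbar s * Vbarᵀ)
        (Ubar * S' * Vbarᵀ) (Icc t₀ t₁) t := by
      have := (L.toContinuousLinearMap.hasFDerivAt (x := Sbar t)).comp_hasDerivWithinAt t
        (hSbar t htmem)
      exact this
    have hcomp := (hE (Ubar * Sbar t * Vbarᵀ)).comp_hasDerivWithinAt t hL
    convert hcomp using 1
    · rfl
    · rfl
    · rfl
    refine Eq.trans ?_ (hF _ _).symm
    have key : Matrix.trace ((F (Ubar * Sbar t * Vbarᵀ))ᵀ * (Ubar * S' * Vbarᵀ))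
        = Matrix.trace (S'ᵀ * S') := by
      rw [show (F (Ubar * Sbar t * Vbarᵀ))ᵀ * (Ubar * S' * Vbarᵀ)
          = ((F (Ubar * Sbar t * Vbarᵀ))ᵀ * Ubar * S') * Vbarᵀ by simp [Matrix.mul_assoc],
        Matrix.trace_mul_cycle]
      congr 1
      rw [hS']
      simp [Matrix.transpose_mul, Matrix.mul_assoc]
    rw [key, ← frob_norm_sq_eq_trace]
  refine ⟨?_, hderiv⟩
  have hcont : ContinuousOn (fun t => E (Ubar * Sbar t * Vbarᵀ)) (Icc t₀ t₁) :=
    fun t htmem => (hderiv t htmem).continuousWithinAt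
  apply antitoneOn_of_deriv_nonpos (convex_Icc t₀ t₁) hcont
  · intro t htmem
    rw [interior_Icc] at htmem
    exact ((hderiv t (Ioo_subset_Icc_self htmem)).hasDerivAt
      (Icc_mem_nhds htmem.1 htmem.2)).differentiableAt.differentiableWithinAt
  · intro t htmem
    rw [interior_Icc] at htmem
    have := ((hderiv t (Ioo_subset_Icc_self htmem)).hasDerivAt
      (Icc_mem_nhds htmem.1 htmem.2)).deriv
    rw [this]
    exact neg_nonpos.mpr (by positivity)
end
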